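/- Fractional integration by parts for right Caputo derivatives: for suitable f, g on [a,b], ∫_a^b g(x) · (ᶜ_xD_b^α f)(x) dx = ∫_a^b f(x) · (_aD_x^α g)(x) dx − [(_aI_x^{1-α} g)(x) · f(x)]_{x=a}^{x=b}. -/

import Mathlib

open MeasureTheory Set intervalIntegral

/-- The right Caputo fractional derivative of order `α` with end point `b`. -/
noncomputable def caputoRight (α b : ℝ) (f : ℝ → ℝ) (x : ℝ) : ℝ :=
  (-1 / Real.Gamma (1 - α)) * ∫ t in x..b, (t - x) ^ (-α) * deriv f t

/-- The left Riemann–Liouville fractional integral of order `α` with base point `a`. -/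
noncomputable def rlIntLeft (α a : ℝ) (g : ℝ → ℝ) (x : ℝ) : ℝ :=
  (1 / Real.Gamma α) * ∫ t in a..x, (x - t) ^ (α - 1) * g t

/-- The left Riemann–Liouville fractional derivative of order `α` with base point `a`. -/
noncomputable def rlDerLeft (α a : ℝ) (g : ℝ → ℝ) (x : ℝ) : ℝ :=
  deriv (rlIntLeft (1 - α) a g) x

/-- Fractional integration by parts for right Caputo derivatives:
`∫_a^b g·(ᶜ_xD_b^α f) = ∫_a^b f·(_aD_x^α g) − [(_aI_x^{1-α} g)·f]_{x=a}^{x=b}`. -/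
theorem fractional_integration_by_parts_right (α a b : ℝ) (f g : ℝ → ℝ)
    (hα0 : 0 < α) (hα1 : α < 1) (hab : a < b)
    (hg : ContinuousOn g (Set.Icc a b))
    (hf : ∀ x ∈ Set.Icc a b, DifferentiableAt ℝ f x)
    (hf' : ContinuousOn (deriv f) (Set.Icc a b))
    (hI : ∀ x ∈ Set.Icc a b, DifferentiableAt ℝ (rlIntLeft (1 - α) a g) x)
    (hI' : ContinuousOn (deriv (rlIntLeft (1 - α) a g)) (Set.Icc a b)) :
    ∫ x in a..b, g x * caputoRight α b f x =
      (∫ x in a..b, f x * rlDerLeft α a g x) -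
        (rlIntLeft (1 - α) a g b * f b - rlIntLeft (1 - α) a g a * f a) := by
  have h1α : (0:ℝ) < 1 - α := by linarith
  have hΓ : 0 < Real.Gamma (1 - α) := Real.Gamma_pos_of_pos h1α
  set μ : Measure ℝ := volume.restrict (Set.Ioc a b) with hμ
  haveI : IsFiniteMeasure μ := by
    rw [hμ]; exact ⟨by simpa using measure_Ioc_lt_top⟩
  set φ : ℝ → ℝ → ℝ := fun x t => g x * ((t - x) ^ (-α) * deriv f t) with hφ
  set P : ℝ × ℝ → ℝ := fun p => if p.1 < p.2 then φ p.1 p.2 else 0 with hPdef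
  obtain ⟨Mg, hMg⟩ := (isCompact_Icc (a := a) (b := b)).exists_bound_of_continuousOn hg
  obtain ⟨Mf, hMf⟩ := (isCompact_Icc (a := a) (b := b)).exists_bound_of_continuousOn hf'
  have hMg0 : 0 ≤ Mg := le_trans (norm_nonneg (g a)) (hMg a ⟨le_rfl, hab.le⟩)
  have hMf0 : 0 ≤ Mf := le_trans (norm_nonneg (deriv f a)) (hMf a ⟨le_rfl, hab.le⟩)
  have hae : ∀ᵐ x ∂μ, x ∈ Set.Ioc a b := by
    rw [hμ]; exact ae_restrict_mem measurableSet_Ioc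
  -- kernel measurability and integrability
  have hr : Measurable (fun y : ℝ => y ^ (-α)) :=
    measurable_of_continuousOn_compl_singleton 0 (fun y hy =>
      (Real.continuousAt_rpow_const y (-α) (Or.inl hy)).continuousWithinAt)
  have hKint : ∀ x : ℝ, IntervalIntegrable (fun t => (t - x) ^ (-α)) volume x b := by
    intro x
    have h := (intervalIntegrable_rpow' (show (-1:ℝ) < -α by linarith)
      (a := 0) (b := b - x)).comp_sub_right x
    simpa using h
  have hKval : ∀ x : ℝ, (∫ t in x..b, (t - x) ^ (-α)) = (b - x) ^ (1 - α) / (1 - α) := by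
    intro x
    have h := intervalIntegral.integral_comp_sub_right (a := x) (b := b)
      (fun u => u ^ (-α)) x
    rw [h, sub_self, integral_rpow (Or.inl (show (-1:ℝ) < -α by linarith)),
      Real.zero_rpow (by linarith), show -α + 1 = 1 - α by ring]
    ring
  have hKI : ∀ x ∈ Set.Ioc a b, IntegrableOn (fun t => (t - x) ^ (-α)) (Set.Ioc x b) :=
    fun x hx => (intervalIntegrable_iff_integrableOn_Ioc_of_le hx.2).mp (hKint x)
  -- set identities
  have hset1 : ∀ x ∈ Set.Ioc a b, Set.Ioi x ∩ Set.Ioc a b = Set.Ioc x b := by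
    intro x hx
    ext t
    simp only [mem_inter_iff, mem_Ioi, mem_Ioc]
    exact ⟨fun ⟨h1, _, h3⟩ => ⟨h1, h3⟩, fun ⟨h1, h2⟩ => ⟨h1, hx.1.trans h1, h2⟩⟩
  have hset2 : ∀ t ∈ Set.Ioc a b, Set.Iio t ∩ Set.Ioc a b = Set.Ioo a t := by
    intro t ht
    ext x
    simp only [mem_inter_iff, mem_Iio, mem_Ioc, mem_Ioo]
    exact ⟨fun ⟨h1, h2, _⟩ => ⟨h2, h1⟩, fun ⟨h1, h2⟩ => ⟨h2, h1, h2.le.trans ht.2⟩⟩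
  have hsub : ∀ x ∈ Set.Ioc a b, Set.Ioc x b ⊆ Set.Ioc a b :=
    fun x hx t ht => ⟨hx.1.trans ht.1, ht.2⟩
  -- P as indicators
  have hPeq1 : ∀ x : ℝ, (fun t => P (x, t)) = (Set.Ioi x).indicator (φ x) := by
    intro x; funext t; simp [hPdef, indicator_apply, mem_Ioi]
  have hPeq2 : ∀ t : ℝ, (fun x => P (x, t)) = (Set.Iio t).indicator (fun x => φ x t) := by
    intro t; funext x; simp [hPdef, indicator_apply, mem_Iio]
  -- integrability of φ x on Ioc x b
  have hφint : ∀ x ∈ Set.Ioc a b, IntegrableOn (φ x) (Set.Ioc x b) volume := by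
    intro x hx
    apply Integrable.const_mul
    apply Integrable.mono' ((hKI x hx).const_mul Mf)
    · exact ((hr.comp (measurable_id.sub measurable_const)).aestronglyMeasurable).mul
        ((hf'.mono (fun t ht => ⟨hx.1.le.trans ht.1.le, ht.2⟩)).aestronglyMeasurable
          measurableSet_Ioc)
    · filter_upwards [ae_restrict_mem measurableSet_Ioc] with t ht
      have h0 : (0:ℝ) ≤ (t - x) ^ (-α) := Real.rpow_nonneg (by linarith [ht.1]) _
      rw [norm_mul, Real.norm_of_nonneg h0]
      calc (t - x) ^ (-α) * ‖deriv f t‖ ≤ (t - x) ^ (-α) * Mf :=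
            mul_le_mul_of_nonneg_left (hMf t ⟨hx.1.le.trans ht.1.le, ht.2⟩) h0
        _ = Mf * (t - x) ^ (-α) := mul_comm _ _
  -- inner integrability
  have hInner : ∀ x ∈ Set.Ioc a b, Integrable (fun t => P (x, t)) μ := by
    intro x hx
    rw [hPeq1 x, hμ, integrable_indicator_iff measurableSet_Ioi, IntegrableOn,
      Measure.restrict_restrict measurableSet_Ioi, hset1 x hx]
    exact hφint x hx
  -- measurability of P
  have hPmeas : AEStronglyMeasurable P (μ.prod μ) := by
    have hgm : AEStronglyMeasurable g μ := by
      rw [hμ]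
      exact (hg.mono Set.Ioc_subset_Icc_self).aestronglyMeasurable measurableSet_Ioc
    have hfm : AEStronglyMeasurable (deriv f) μ := by
      rw [hμ]
      exact (hf'.mono Set.Ioc_subset_Icc_self).aestronglyMeasurable measurableSet_Ioc
    have hKm : AEStronglyMeasurable (fun p : ℝ × ℝ => (p.2 - p.1) ^ (-α)) (μ.prod μ) :=
      (hr.comp (measurable_snd.sub measurable_fst)).aestronglyMeasurable
    have heq : P = Set.indicator {p : ℝ × ℝ | p.1 < p.2}
        (fun p => g p.1 * ((p.2 - p.1) ^ (-α) * deriv f p.2)) := by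
      funext p; simp [hPdef, hφ, Set.indicator_apply, Set.mem_setOf_eq]
    rw [heq]
    exact (hgm.comp_fst.mul (hKm.mul hfm.comp_snd)).indicator
      (measurableSet_lt measurable_fst measurable_snd)
  -- norm bound
  set C : ℝ := Mg * Mf * ((b - a) ^ (1 - α) / (1 - α)) with hC
  have hNorm : ∀ x ∈ Set.Ioc a b, (∫ t, ‖P (x, t)‖ ∂μ) ≤ C := by
    intro x hx
    have hDint : Integrable ((Set.Ioc x b).indicator
        (fun t => Mg * Mf * (t - x) ^ (-α))) μ := by
      rw [hμ, integrable_indicator_iff measurableSet_Ioc, IntegrableOn,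
        Measure.restrict_restrict measurableSet_Ioc,
        Set.inter_eq_left.mpr (hsub x hx)]
      exact (hKI x hx).const_mul _
    have hle : (∫ t, ‖P (x, t)‖ ∂μ) ≤
        ∫ t, (Set.Ioc x b).indicator (fun t => Mg * Mf * (t - x) ^ (-α)) t ∂μ := by
      refine integral_mono_ae (hInner x hx).norm hDint ?_
      filter_upwards [hae] with t ht
      by_cases hxt : x < t
      · have h0 : (0:ℝ) ≤ (t - x) ^ (-α) := Real.rpow_nonneg (by linarith) _
        rw [Set.indicator_of_mem (show t ∈ Set.Ioc x b from ⟨hxt, ht.2⟩)]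
        simp only [hPdef, if_pos hxt, hφ]
        rw [norm_mul, norm_mul, Real.norm_of_nonneg h0]
        have hgx : ‖g x‖ ≤ Mg := hMg x ⟨hx.1.le, hx.2⟩
        have hft : ‖deriv f t‖ ≤ Mf := hMf t ⟨(hx.1.trans hxt).le, ht.2⟩
        calc ‖g x‖ * ((t - x) ^ (-α) * ‖deriv f t‖)
            ≤ Mg * ((t - x) ^ (-α) * Mf) := by
              apply mul_le_mul hgx (mul_le_mul_of_nonneg_left hft h0) (by positivity) hMg0
          _ = Mg * Mf * (t - x) ^ (-α) := by ring
      · rw [indicator_of_notMem (fun hmem => hxt hmem.1)]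
        simp [hPdef, if_neg hxt]
    have heval : (∫ t, (Set.Ioc x b).indicator
        (fun t => Mg * Mf * (t - x) ^ (-α)) t ∂μ)
        = Mg * Mf * ((b - x) ^ (1 - α) / (1 - α)) := by
      rw [hμ, MeasureTheory.integral_indicator measurableSet_Ioc,
        Measure.restrict_restrict measurableSet_Ioc,
        Set.inter_eq_left.mpr (hsub x hx), MeasureTheory.integral_const_mul,
        ← intervalIntegral.integral_of_le hx.2, hKval x]
    have hfinal : Mg * Mf * ((b - x) ^ (1 - α) / (1 - α)) ≤ C := by
      rw [hC]
      have : (b - x) ^ (1 - α) ≤ (b - a) ^ (1 - α) :=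
        Real.rpow_le_rpow (by linarith [hx.2]) (by linarith [hx.1]) h1α.le
      have h2 : (b - x) ^ (1 - α) / (1 - α) ≤ (b - a) ^ (1 - α) / (1 - α) := by
        gcongr
      exact mul_le_mul_of_nonneg_left h2 (by positivity)
    calc (∫ t, ‖P (x, t)‖ ∂μ) ≤ _ := hle
      _ = _ := heval
      _ ≤ C := hfinal
  have hIntNorm : Integrable (fun x => ∫ t, ‖P (x, t)‖ ∂μ) μ := by
    refine Integrable.mono' (integrable_const C) (hPmeas.norm.integral_prod_right') ?_
    filter_upwards [hae] with x hx
    rw [Real.norm_of_nonneg (integral_nonneg fun t => norm_nonneg _)]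
    exact hNorm x hx
  have hP : Integrable P (μ.prod μ) :=
    (integrable_prod_iff hPmeas).2 ⟨hae.mono hInner, hIntNorm⟩
  -- integral identities
  have hEq1 : ∀ x ∈ Set.Ioc a b, (∫ t, P (x, t) ∂μ) = ∫ t in x..b, φ x t := by
    intro x hx
    rw [hPeq1 x, hμ, MeasureTheory.integral_indicator measurableSet_Ioi,
      Measure.restrict_restrict measurableSet_Ioi, hset1 x hx,
      ← intervalIntegral.integral_of_le hx.2]
  have hEq2 : ∀ t ∈ Set.Ioc a b, (∫ x, P (x, t) ∂μ) = ∫ x in a..t, φ x t := by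
    intro t ht
    rw [hPeq2 t, hμ, MeasureTheory.integral_indicator measurableSet_Iio,
      Measure.restrict_restrict measurableSet_Iio, hset2 t ht,
      Measure.restrict_congr_set Ioo_ae_eq_Ioc,
      ← intervalIntegral.integral_of_le ht.1.le]
  -- main computation
  calc (∫ x in a..b, g x * caputoRight α b f x)
      = ∫ x in a..b, (-1 / Real.Gamma (1 - α)) * ∫ t, P (x, t) ∂μ := by
        rw [intervalIntegral.integral_of_le hab.le, intervalIntegral.integral_of_le hab.le]
        refine setIntegral_congr_fun measurableSet_Ioc (fun x hx => ?_)
        rw [hEq1 x hx, caputoRight]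
        simp only [hφ]
        rw [intervalIntegral.integral_const_mul]
        ring
    _ = (-1 / Real.Gamma (1 - α)) * ∫ x, (∫ t, P (x, t) ∂μ) ∂μ := by
        rw [intervalIntegral.integral_const_mul, intervalIntegral.integral_of_le hab.le, ← hμ]
    _ = (-1 / Real.Gamma (1 - α)) * ∫ t, (∫ x, P (x, t) ∂μ) ∂μ := by
        rw [integral_integral_swap (f := fun x t => P (x, t)) hP]
    _ = (-1 / Real.Gamma (1 - α)) *
          ∫ t in a..b, deriv f t * ∫ x in a..t, (t - x) ^ (-α) * g x := by
        rw [intervalIntegral.integral_of_le hab.le, ← hμ]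
        congr 1
        refine setIntegral_congr_fun measurableSet_Ioc (fun t ht => ?_)
        rw [hEq2 t ht, ← intervalIntegral.integral_const_mul]
        refine intervalIntegral.integral_congr (fun x hx => ?_)
        simp only [hφ]
        ring
    _ = - ∫ t in a..b, rlIntLeft (1 - α) a g t * deriv f t := by
        have h2 : (∫ t in a..b, rlIntLeft (1 - α) a g t * deriv f t)
            = (1 / Real.Gamma (1 - α)) *
              ∫ t in a..b, deriv f t * ∫ x in a..t, (t - x) ^ (-α) * g x := by
          rw [← intervalIntegral.integral_const_mul]
          refine intervalIntegral.integral_congr (fun t ht => ?_)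
          rw [rlIntLeft, show (1:ℝ) - α - 1 = -α by ring]
          ring
        rw [h2]
        ring
    _ = (∫ x in a..b, f x * rlDerLeft α a g x) -
          (rlIntLeft (1 - α) a g b * f b - rlIntLeft (1 - α) a g a * f a) := by
        have hIcc : Set.uIcc a b = Set.Icc a b := Set.uIcc_of_le hab.le
        have hu : ∀ x ∈ Set.uIcc a b,
            HasDerivAt (rlIntLeft (1 - α) a g) (deriv (rlIntLeft (1 - α) a g) x) x :=
          fun x hx => (hI x (hIcc ▸ hx)).hasDerivAt
        have hv : ∀ x ∈ Set.uIcc a b, HasDerivAt f (deriv f x) x :=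
          fun x hx => (hf x (hIcc ▸ hx)).hasDerivAt
        have hu' : IntervalIntegrable (deriv (rlIntLeft (1 - α) a g)) volume a b := by
          apply ContinuousOn.intervalIntegrable
          rw [hIcc]; exact hI'
        have hv' : IntervalIntegrable (deriv f) volume a b := by
          apply ContinuousOn.intervalIntegrable
          rw [hIcc]; exact hf'
        have hibp := intervalIntegral.integral_mul_deriv_eq_deriv_mul hu hv hu' hv'
        have hcomm : (∫ x in a..b, deriv (rlIntLeft (1 - α) a g) x * f x)
            = ∫ x in a..b, f x * rlDerLeft α a g x :=
          intervalIntegral.integral_congr fun x _ => by rw [rlDerLeft]; ring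
        rw [hibp, hcomm]
        ring
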